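/- Consider the K_5-bootstrap percolation process and suppose that at time t the graph G_t contains two 5-element vertex sets A_1 and A_2, each inducing a clique in G_t, with A_1 ∩ A_2 = {u, v} where uv is an edge, together with an edge wz of G_t for some w ∈ A_1 \ {u,v} and z ∈ A_2 \ {u,v}. Then the 8-element vertex set A_1 ∪ A_2 induces a complete graph K_8 in G_{t+2}. -/

import Mathlib

/-- One step of the `K_r`-bootstrap percolation process: we add every edge `uv` for which
there is an `r`-element vertex set `S` containing `u` and `v` such that every edge within `S`
other than `uv` is already present. -/
def bootStep {V : Type*} (r : ℕ) (G : SimpleGraph V) : SimpleGraph V where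
  Adj u v := G.Adj u v ∨ (u ≠ v ∧ ∃ S : Finset V, S.card = r ∧ u ∈ S ∧ v ∈ S ∧
    ∀ x ∈ S, ∀ y ∈ S, x ≠ y → ¬((x = u ∧ y = v) ∨ (x = v ∧ y = u)) → G.Adj x y)
  symm := by
    constructor
    intro a b h
    rcases h with h | ⟨hne, S, hS, ha, hb, hall⟩
    · exact Or.inl h.symm
    · refine Or.inr ⟨hne.symm, S, hS, hb, ha, ?_⟩
      intro x hx y hy hxy hno
      exact hall x hx y hy hxy (by tauto)
  loopless := by
    constructor
    intro a h
    rcases h with h | ⟨hne, _⟩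
    · exact G.irrefl h
    · exact hne rfl

lemma fill5 {V : Type*} [DecidableEq V] (H : SimpleGraph V) (a b c d e : V)
    (hab : H.Adj a b) (hac : H.Adj a c) (had : H.Adj a d) (hae : H.Adj a e)
    (hbc : H.Adj b c) (hbd : H.Adj b d) (hbe : H.Adj b e)
    (hcd : H.Adj c d) (hce : H.Adj c e) (hde : d ≠ e) :
    (bootStep 5 H).Adj d e := by
  have h1 := hab.ne; have h2 := hac.ne; have h3 := had.ne; have h4 := hae.ne
  have h5 := hbc.ne; have h6 := hbd.ne; have h7 := hbe.ne
  have h8 := hcd.ne; have h9 := hce.ne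
  refine Or.inr ⟨hde, {a,b,c,d,e}, ?_, by simp, by simp, ?_⟩
  · rw [Finset.card_insert_of_notMem
        (by simp only [Finset.mem_insert, Finset.mem_singleton]; tauto),
      Finset.card_insert_of_notMem
        (by simp only [Finset.mem_insert, Finset.mem_singleton]; tauto),
      Finset.card_insert_of_notMem
        (by simp only [Finset.mem_insert, Finset.mem_singleton]; tauto),
      Finset.card_insert_of_notMem (by simpa using hde),
      Finset.card_singleton]
  · intro x hx y hy hxy hno
    simp only [Finset.mem_insert, Finset.mem_singleton] at hx hy
    rcases hx with rfl|rfl|rfl|rfl|rfl <;> rcases hy with rfl|rfl|rfl|rfl|rfl <;>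
      first
        | exact absurd rfl hxy
        | (exfalso; apply hno; left; constructor <;> rfl)
        | (exfalso; apply hno; right; constructor <;> rfl)
        | assumption
        | exact hab.symm | exact hac.symm | exact had.symm | exact hae.symm
        | exact hbc.symm | exact hbd.symm | exact hbe.symm
        | exact hcd.symm | exact hce.symm

/-- In the `K_5`-bootstrap process, if `G_t` contains two 5-sets `A₁, A₂`, each inducing a
clique, with `A₁ ∩ A₂ = {u, v}` an edge, together with an edge `wz` for some
`w ∈ A₁ \{u,v}` and `z ∈ A₂ \{u,v}`, then the 8-element set `A₁ ∪ A₂` induces a complete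
graph `K₈` in `G_{t+2}`. -/
theorem two_cliques_fill {V : Type*} [DecidableEq V] (G : SimpleGraph V) (t : ℕ)
    (A₁ A₂ : Finset V) (h₁ : A₁.card = 5) (h₂ : A₂.card = 5)
    (u v w z : V) (huv : u ≠ v) (hint : A₁ ∩ A₂ = {u, v})
    (hc₁ : ((bootStep 5)^[t] G).IsClique (A₁ : Set V))
    (hc₂ : ((bootStep 5)^[t] G).IsClique (A₂ : Set V))
    (hw : w ∈ A₁) (hwu : w ≠ u) (hwv : w ≠ v)
    (hz : z ∈ A₂) (hzu : z ≠ u) (hzv : z ≠ v)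
    (hwz : ((bootStep 5)^[t] G).Adj w z) :
    (A₁ ∪ A₂).card = 8 ∧
      ((bootStep 5)^[t + 2] G).IsClique ((A₁ ∪ A₂ : Finset V) : Set V) := by
  set H := (bootStep 5)^[t] G with hH
  have huA : u ∈ A₁ ∩ A₂ := by rw [hint]; simp
  have hvA : v ∈ A₁ ∩ A₂ := by rw [hint]; simp
  have hu1 : u ∈ A₁ := (Finset.mem_inter.mp huA).1
  have hu2 : u ∈ A₂ := (Finset.mem_inter.mp huA).2
  have hv1 : v ∈ A₁ := (Finset.mem_inter.mp hvA).1
  have hv2 : v ∈ A₂ := (Finset.mem_inter.mp hvA).2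
  have hw2 : w ∉ A₂ := by
    intro h
    have : w ∈ A₁ ∩ A₂ := Finset.mem_inter.mpr ⟨hw, h⟩
    rw [hint] at this
    simp only [Finset.mem_insert, Finset.mem_singleton] at this
    tauto
  have hz1 : z ∉ A₁ := by
    intro h
    have : z ∈ A₁ ∩ A₂ := Finset.mem_inter.mpr ⟨h, hz⟩
    rw [hint] at this
    simp only [Finset.mem_insert, Finset.mem_singleton] at this
    tauto
  have hcard : (A₁ ∪ A₂).card = 8 := by
    have hc := Finset.card_union_add_card_inter A₁ A₂
    rw [hint] at hc
    have h2' : ({u, v} : Finset V).card = 2 := by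
      rw [Finset.card_insert_of_notMem (by simpa using huv), Finset.card_singleton]
    omega
  refine ⟨hcard, ?_⟩
  have adj₁ : ∀ {x y : V}, x ∈ A₁ → y ∈ A₁ → x ≠ y → H.Adj x y := fun hx hy h =>
    hc₁ (Finset.mem_coe.mpr hx) (Finset.mem_coe.mpr hy) h
  have adj₂ : ∀ {x y : V}, x ∈ A₂ → y ∈ A₂ → x ≠ y → H.Adj x y := fun hx hy h =>
    hc₂ (Finset.mem_coe.mpr hx) (Finset.mem_coe.mpr hy) h
  -- step t+1 facts
  have key1 : ∀ x ∈ A₁, x ∉ A₂ → (bootStep 5 H).Adj z x := by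
    intro x hx hx2
    have hzx : z ≠ x := fun h => hz1 (h ▸ hx)
    by_cases hxw : x = w
    · subst hxw; exact Or.inl hwz.symm
    · have hxu : x ≠ u := fun h => hx2 (h ▸ hu2)
      have hxv : x ≠ v := fun h => hx2 (h ▸ hv2)
      exact fill5 H u v w z x
        (adj₁ hu1 hv1 huv) (adj₁ hu1 hw (Ne.symm hwu)) (adj₂ hu2 hz (Ne.symm hzu))
        (adj₁ hu1 hx (Ne.symm hxu)) (adj₁ hv1 hw (Ne.symm hwv)) (adj₂ hv2 hz (Ne.symm hzv))
        (adj₁ hv1 hx (Ne.symm hxv)) hwz (adj₁ hw hx (fun h => hxw h.symm)) hzx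
  have key2 : ∀ y ∈ A₂, y ∉ A₁ → (bootStep 5 H).Adj w y := by
    intro y hy hy1
    have hwy : w ≠ y := fun h => hw2 (h ▸ hy)
    by_cases hyz : y = z
    · subst hyz; exact Or.inl hwz
    · have hyu : y ≠ u := fun h => hy1 (h ▸ hu1)
      have hyv : y ≠ v := fun h => hy1 (h ▸ hv1)
      exact fill5 H u v z w y
        (adj₁ hu1 hv1 huv) (adj₂ hu2 hz (Ne.symm hzu)) (adj₁ hu1 hw (Ne.symm hwu))
        (adj₂ hu2 hy (Ne.symm hyu)) (adj₂ hv2 hz (Ne.symm hzv)) (adj₁ hv1 hw (Ne.symm hwv))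
        (adj₂ hv2 hy (Ne.symm hyv)) hwz.symm (adj₂ hz hy (fun h => hyz h.symm)) hwy
  -- step t+2 cross edges
  have cross : ∀ x ∈ A₁, x ∉ A₂ → ∀ y ∈ A₂, y ∉ A₁ →
      (bootStep 5 (bootStep 5 H)).Adj x y := by
    intro x hx hx2 y hy hy1
    have hxy : x ≠ y := fun h => hx2 (h ▸ hy)
    by_cases hxw : x = w
    · subst hxw; exact Or.inl (key2 y hy hy1)
    · by_cases hyz : y = z
      · subst hyz; exact Or.inl (key1 x hx hx2).symm
      · have hxu : x ≠ u := fun h => hx2 (h ▸ hu2)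
        have hyu : y ≠ u := fun h => hy1 (h ▸ hu1)
        have hwx : w ≠ x := fun h => hxw h.symm
        have hzy : z ≠ y := fun h => hyz h.symm
        exact fill5 (bootStep 5 H) u w z x y
          (Or.inl (adj₁ hu1 hw (Ne.symm hwu))) (Or.inl (adj₂ hu2 hz (Ne.symm hzu)))
          (Or.inl (adj₁ hu1 hx (Ne.symm hxu))) (Or.inl (adj₂ hu2 hy (Ne.symm hyu)))
          (Or.inl hwz) (Or.inl (adj₁ hw hx hwx))
          (key2 y hy hy1) (key1 x hx hx2) (Or.inl (adj₂ hz hy hzy)) hxy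
  have hiter : (bootStep 5)^[t + 2] G = bootStep 5 (bootStep 5 H) := by
    rw [show t + 2 = (t + 1) + 1 from rfl, Function.iterate_succ_apply',
      Function.iterate_succ_apply', hH]
  rw [hiter]
  intro x hx y hy hxy
  simp only [Finset.coe_union, Set.mem_union, Finset.mem_coe] at hx hy
  have lift2 : ∀ {a b : V}, H.Adj a b → (bootStep 5 (bootStep 5 H)).Adj a b :=
    fun h => Or.inl (Or.inl h)
  rcases hx with hx | hx <;> rcases hy with hy | hy
  · exact lift2 (adj₁ hx hy hxy)
  · by_cases hxA2 : x ∈ A₂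
    · exact lift2 (adj₂ hxA2 hy hxy)
    · by_cases hyA1 : y ∈ A₁
      · exact lift2 (adj₁ hx hyA1 hxy)
      · exact cross x hx hxA2 y hy hyA1
  · by_cases hyA2 : y ∈ A₂
    · exact lift2 (adj₂ hx hyA2 hxy)
    · by_cases hxA1 : x ∈ A₁
      · exact lift2 (adj₁ hxA1 hy hxy)
      · exact (cross y hy hyA2 x hx hxA1).symm
  · exact lift2 (adj₂ hx hy hxy)
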